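/- (Van der Corput) Let k ≥ 2 be an integer and F a real-valued smooth function on (a,b) with |F^{(k)}(x)| ≥ ε for all x in (a,b), and let ψ be a C¹ function on [a,b]. Then there is a constant c depending only on k such that for all t ≠ 0, |∫_a^b e^{-itF(x)} ψ(x) dx| ≤ c ε^{-1/k} |t|^{-1/k} ( |ψ(b)| + ∫_a^b |ψ'(x)| dx ). -/

import Mathlib

open MeasureTheory Set intervalIntegral

section VDC

open Filter Topology


lemma vdc_norm_exp (t r : ℝ) : ‖Complex.exp (-Complex.I * t * r)‖ = 1 := by
  have : (-Complex.I * t * r : ℂ) = ((-(t*r) : ℝ) : ℂ) * Complex.I := by push_cast; ring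
  rw [this, Complex.norm_exp_ofReal_mul_I]

lemma vdc_conj_int (u v t : ℝ) (F : ℝ → ℝ) :
    ‖∫ x in u..v, Complex.exp (-Complex.I * t * (-F x))‖
      = ‖∫ x in u..v, Complex.exp (-Complex.I * t * F x)‖ := by
  have h : ∀ x : ℝ, Complex.exp (-Complex.I * t * (-F x))
      = (starRingEnd ℂ) (Complex.exp (-Complex.I * t * F x)) := by
    intro x
    rw [← Complex.exp_conj]
    congr 1
    simp [Complex.conj_I]
  simp_rw [h]
  rw [intervalIntegral, integral_conj, integral_conj,
    show ∀ z w : ℂ, (starRingEnd ℂ) z - (starRingEnd ℂ) w = (starRingEnd ℂ) (z - w) by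
      intro z w; rw [map_sub]]
  rw [RCLike.norm_conj]
  rfl

lemma vdc_closure_le {h : ℝ → ℝ} {c u v : ℝ} (huv : u < v)
    (hc : ContinuousOn h (Icc u v)) (hb : ∀ x ∈ Ioo u v, c ≤ h x) :
    ∀ x ∈ Icc u v, c ≤ h x := by
  intro x hx
  have hxcl : x ∈ closure (Ioo u v) := by rw [closure_Ioo huv.ne]; exact hx
  have hne : (𝓝[Ioo u v] x).NeBot := mem_closure_iff_nhdsWithin_neBot.mp hxcl
  have ht : Filter.Tendsto h (𝓝[Ioo u v] x) (𝓝 (h x)) :=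
    (hc x hx).mono Ioo_subset_Icc_self
  exact ge_of_tendsto ht (eventually_nhdsWithin_of_forall hb)

lemma vdc_sign_dichotomy {h : ℝ → ℝ} {u v lam : ℝ} (hlam : 0 < lam)
    (hc : ContinuousOn h (Ioo u v)) (hb : ∀ x ∈ Ioo u v, lam ≤ |h x|) :
    (∀ x ∈ Ioo u v, lam ≤ h x) ∨ (∀ x ∈ Ioo u v, h x ≤ -lam) := by
  by_contra hcon
  push_neg at hcon
  obtain ⟨⟨x₁, hx₁, hx₁'⟩, ⟨x₂, hx₂, hx₂'⟩⟩ := hcon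
  have h1 : h x₁ ≤ -lam := by
    rcases le_or_gt (h x₁) 0 with h0 | h0
    · have := hb x₁ hx₁
      rw [abs_of_nonpos h0] at this; linarith
    · have := hb x₁ hx₁
      rw [abs_of_pos h0] at this; linarith
  have h2 : lam ≤ h x₂ := by
    rcases le_or_gt (h x₂) 0 with h0 | h0
    · have := hb x₂ hx₂
      rw [abs_of_nonpos h0] at this; linarith
    · have := hb x₂ hx₂
      rw [abs_of_pos h0] at this; linarith
  have hsub : uIcc x₁ x₂ ⊆ Ioo u v := by
    apply Set.OrdConnected.uIcc_subset ordConnected_Ioo hx₁ hx₂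
  have := intermediate_value_uIcc (hc.mono hsub)
  have h0 : (0:ℝ) ∈ uIcc (h x₁) (h x₂) := by
    rw [Set.mem_uIcc]; left; constructor <;> linarith
  obtain ⟨x₀, hx₀, hx₀'⟩ := this h0
  have := hb x₀ (hsub hx₀)
  rw [hx₀'] at this
  simp at this; linarith

lemma vdc_iteratedDerivWithin_of_isOpen {n : ℕ} {f : ℝ → ℝ} {s : Set ℝ} (hs : IsOpen s)
    {x : ℝ} (hx : x ∈ s) : iteratedDerivWithin n f s x = iteratedDeriv n f x := by
  simp only [iteratedDerivWithin, iteratedDeriv, iteratedFDerivWithin_of_isOpen n hs hx]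

lemma vdc_contOn_iteratedDeriv {n k : ℕ} (hkn : k ≤ n) {F : ℝ → ℝ} {s : Set ℝ}
    (hs : IsOpen s) (hF : ContDiffOn ℝ n F s) : ContinuousOn (iteratedDeriv k F) s :=
  (hF.continuousOn_iteratedDerivWithin (by exact_mod_cast hkn) hs.uniqueDiffOn).congr
    (fun x hx => (vdc_iteratedDerivWithin_of_isOpen hs hx).symm)

lemma vdc_hasDerivAt_iteratedDeriv {n k : ℕ} (hkn : k < n) {F : ℝ → ℝ} {s : Set ℝ}
    (hs : IsOpen s) (hF : ContDiffOn ℝ n F s) {x : ℝ} (hx : x ∈ s) :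
    HasDerivAt (iteratedDeriv k F) (iteratedDeriv (k+1) F x) x := by
  have dOn : DifferentiableOn ℝ (iteratedDeriv k F) s :=
    (hF.differentiableOn_iteratedDerivWithin (by exact_mod_cast hkn) hs.uniqueDiffOn).congr
      (fun y hy => (vdc_iteratedDerivWithin_of_isOpen hs hy).symm)
  have hda : DifferentiableAt ℝ (iteratedDeriv k F) x :=
    (dOn x hx).differentiableAt (hs.mem_nhds hx)
  have := hda.hasDerivAt
  rwa [show deriv (iteratedDeriv k F) x = iteratedDeriv (k+1) F x by
    rw [iteratedDeriv_succ]] at this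

lemma vdc_hasDerivAt_F {n : ℕ} (hn : 1 ≤ n) {F : ℝ → ℝ} {s : Set ℝ}
    (hs : IsOpen s) (hF : ContDiffOn ℝ n F s) {x : ℝ} (hx : x ∈ s) :
    HasDerivAt F (deriv F x) x := by
  have h := vdc_hasDerivAt_iteratedDeriv (n := n) (k := 0) hn hs hF hx
  rw [iteratedDeriv_zero] at h
  simpa [iteratedDeriv_one] using h.differentiableAt.hasDerivAt


lemma vdc_base {a b t u v eta : ℝ} {F : ℝ → ℝ} (heta : 0 < eta)
    (hF : ContDiffOn ℝ 2 F (Ioo a b)) (hsub : Icc u v ⊆ Ioo a b) (huv : u ≤ v)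
    (hd : ∀ x ∈ Ioo u v, eta ≤ |t| * |deriv F x|)
    (hsign : (∀ x ∈ Ioo u v, 0 ≤ t * deriv (deriv F) x) ∨
      (∀ x ∈ Ioo u v, t * deriv (deriv F) x ≤ 0)) :
    ‖∫ x in u..v, Complex.exp (-Complex.I * t * F x)‖ ≤ 4 / eta := by
  rcases eq_or_lt_of_le huv with rfl | hlt
  · simp [intervalIntegral.integral_same]; positivity
  set D := deriv F with hD
  set D2 := deriv (deriv F) with hD2
  have hopen : IsOpen (Ioo a b) := isOpen_Ioo
  -- continuity of D, D2 on Ioo a b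
  have hDcont : ContinuousOn D (Ioo a b) := by
    have := vdc_contOn_iteratedDeriv (n := 2) (k := 1) (by norm_num) hopen hF
    rwa [iteratedDeriv_one] at this
  have hD2cont : ContinuousOn D2 (Ioo a b) := by
    have := vdc_contOn_iteratedDeriv (n := 2) (k := 2) le_rfl hopen hF
    rwa [iteratedDeriv_succ, iteratedDeriv_one] at this
  have hD' : ∀ x ∈ Icc u v, HasDerivAt F (D x) x :=
    fun x hx => vdc_hasDerivAt_F (by norm_num) hopen hF (hsub hx)
  have hD2' : ∀ x ∈ Icc u v, HasDerivAt D (D2 x) x := by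
    intro x hx
    have := vdc_hasDerivAt_iteratedDeriv (n := 2) (k := 1) (by norm_num) hopen hF (hsub hx)
    rwa [iteratedDeriv_one, iteratedDeriv_succ, iteratedDeriv_one] at this
  -- bound on Icc
  have hdc : ∀ x ∈ Icc u v, eta ≤ |t| * |D x| :=
    vdc_closure_le hlt (continuousOn_const.mul (hDcont.mono hsub).abs) hd
  have htD : ∀ x ∈ Icc u v, t * D x ≠ 0 := by
    intro x hx
    have h1 := hdc x hx
    intro h0
    rw [← abs_mul] at h1
    rw [h0] at h1; simp at h1; linarith
  -- sign
  obtain ⟨σ, hσ1, hσs⟩ : ∃ σ : ℝ, |σ| = 1 ∧ ∀ x ∈ Ioo u v, 0 ≤ σ * (t * D2 x) := by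
    rcases hsign with hs | hs
    · exact ⟨1, abs_one, fun x hx => by simpa using hs x hx⟩
    · exact ⟨-1, by norm_num, fun x hx => by have := hs x hx; nlinarith⟩
  have hsc : ∀ x ∈ Icc u v, 0 ≤ σ * (t * D2 x) :=
    vdc_closure_le hlt (continuousOn_const.mul (continuousOn_const.mul
      (hD2cont.mono hsub))) hσs
  -- complex functions
  set E : ℝ → ℂ := fun x => Complex.exp (-Complex.I * t * F x) with hE
  set c : ℝ → ℂ := fun x => -Complex.I * t * D x with hc
  set W : ℝ → ℂ := fun x => (c x)⁻¹ with hW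
  set E' : ℝ → ℂ := fun x => E x * c x with hE'
  set W' : ℝ → ℂ := fun x => -(-Complex.I * t * D2 x) / (c x) ^ 2 with hW'
  have hcne : ∀ x ∈ Icc u v, c x ≠ 0 := by
    intro x hx
    have : c x = -Complex.I * ((t * D x : ℝ) : ℂ) := by rw [hc]; push_cast; ring
    rw [this]
    exact mul_ne_zero (by simp [Complex.I_ne_zero]) (by exact_mod_cast htD x hx)
  have hEd : ∀ x ∈ Icc u v, HasDerivAt E (E' x) x := by
    intro x hx
    have h1 : HasDerivAt (fun y => -Complex.I * t * (F y : ℂ)) (-Complex.I * t * D x) x :=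
      ((hD' x hx).ofReal_comp).const_mul (-Complex.I * t)
    exact h1.cexp
  have hWd : ∀ x ∈ Icc u v, HasDerivAt W (W' x) x := by
    intro x hx
    have h1 : HasDerivAt c (-Complex.I * t * D2 x) x :=
      ((hD2' x hx).ofReal_comp).const_mul (-Complex.I * t)
    have h2 := (hasDerivAt_inv (hcne x hx)).comp x h1
    have h3 : W = (fun z : ℂ => z⁻¹) ∘ c := rfl
    rw [h3]
    exact h2.congr_deriv (by simp only [hW']; ring)
  -- continuity of complex functions on Icc u v
  have hFc : ContinuousOn F (Ioo a b) := hF.continuousOn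
  have hEc : ContinuousOn E (Icc u v) :=
    Complex.continuous_exp.comp_continuousOn
      (continuousOn_const.mul (Complex.continuous_ofReal.comp_continuousOn (hFc.mono hsub)))
  have hccont : ContinuousOn c (Icc u v) :=
    continuousOn_const.mul (Complex.continuous_ofReal.comp_continuousOn (hDcont.mono hsub))
  have hD2ccont : ContinuousOn (fun x => (-Complex.I * t * D2 x : ℂ)) (Icc u v) :=
    continuousOn_const.mul (Complex.continuous_ofReal.comp_continuousOn (hD2cont.mono hsub))
  have hWc : ContinuousOn W (Icc u v) := hccont.inv₀ hcne
  have hW'c : ContinuousOn W' (Icc u v) :=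
    (hD2ccont.neg).div (hccont.pow 2) (fun x hx => pow_ne_zero _ (hcne x hx))
  have huIcc : uIcc u v = Icc u v := uIcc_of_le huv
  have hE'i : IntervalIntegrable E' volume u v :=
    (hEc.mul hccont).intervalIntegrable_of_Icc huv
  have hW'i : IntervalIntegrable W' volume u v := hW'c.intervalIntegrable_of_Icc huv
  -- integration by parts
  have key := intervalIntegral.integral_deriv_mul_eq_sub (u := E) (v := W) (u' := E')
    (v' := W') (fun x hx => hEd x (huIcc ▸ hx)) (fun x hx => hWd x (huIcc ▸ hx)) hE'i hW'i
  have hint1 : ∫ x in u..v, E x = ∫ x in u..v, E' x * W x := by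
    apply intervalIntegral.integral_congr
    intro x hx
    rw [huIcc] at hx
    simp only [hE', hW]
    rw [mul_assoc, mul_inv_cancel₀ (hcne x hx), mul_one]
  have hsplit : ∫ x in u..v, (E' x * W x + E x * W' x) =
      (∫ x in u..v, E' x * W x) + ∫ x in u..v, E x * W' x := by
    apply intervalIntegral.integral_add
    · exact ((hEc.mul hccont).mul hWc).intervalIntegrable_of_Icc huv
    · exact (hEc.mul hW'c).intervalIntegrable_of_Icc huv
  have heq : ∫ x in u..v, E x = E v * W v - E u * W u - ∫ x in u..v, E x * W' x := by
    rw [hint1]; rw [hsplit] at key; linear_combination key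
  -- norms
  have hnormE : ∀ x, ‖E x‖ = 1 := fun x => vdc_norm_exp t (F x)
  have hnormc : ∀ x, ‖c x‖ = |t| * |D x| := by
    intro x
    rw [hc]
    simp [norm_mul]
  have hnormW : ∀ x ∈ Icc u v, ‖W x‖ ≤ 1 / eta := by
    intro x hx
    rw [hW]
    simp only [norm_inv]
    rw [hnormc, one_div]
    exact inv_anti₀ heta (hdc x hx)
  -- the real primitive
  set r : ℝ → ℝ := fun x => -σ * (t * D x)⁻¹ with hr
  set r' : ℝ → ℝ := fun x => σ * (t * D2 x) / (t * D x) ^ 2 with hr'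
  have hrd : ∀ x ∈ Icc u v, HasDerivAt r (r' x) x := by
    intro x hx
    have h1 : HasDerivAt (fun y => t * D y) (t * D2 x) x := (hD2' x hx).const_mul t
    have h2 := (h1.inv (htD x hx)).const_mul (-σ)
    exact h2.congr_deriv (by simp only [hr']; ring)
  have hnorm_pt : ∀ x ∈ Icc u v, ‖E x * W' x‖ = r' x := by
    intro x hx
    have h1 : ‖(-Complex.I * t * D2 x : ℂ)‖ = |t| * |D2 x| := by
      simp [norm_mul]
    have h2 : σ * (t * D2 x) = |t| * |D2 x| := by
      have h0 := hsc x hx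
      have h0' : σ * (t * D2 x) = |σ * (t * D2 x)| := (abs_of_nonneg h0).symm
      rw [h0', abs_mul, hσ1, one_mul, abs_mul]
    have h3 : (t * D x) ^ 2 = (|t| * |D x|) ^ 2 := by
      rw [← abs_mul, sq_abs]
    calc ‖E x * W' x‖ = ‖W' x‖ := by rw [norm_mul, hnormE, one_mul]
      _ = |t| * |D2 x| / (|t| * |D x|) ^ 2 := by
          simp only [hW', norm_div, norm_neg, norm_pow, hnormc, h1]
      _ = r' x := by simp only [hr']; rw [h2, h3]
  have hr'c : ContinuousOn r' (Icc u v) := by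
    apply ContinuousOn.div
    · exact continuousOn_const.mul (continuousOn_const.mul (hD2cont.mono hsub))
    · exact (continuousOn_const.mul (hDcont.mono hsub)).pow 2
    · intro x hx; exact pow_ne_zero _ (htD x hx)
  have hr'i : IntervalIntegrable r' volume u v := hr'c.intervalIntegrable_of_Icc huv
  have hftc : ∫ x in u..v, r' x = r v - r u :=
    intervalIntegral.integral_eq_sub_of_hasDerivAt (fun x hx => hrd x (huIcc ▸ hx)) hr'i
  have habsr : ∀ x ∈ Icc u v, |r x| ≤ 1 / eta := by
    intro x hx
    rw [hr, abs_mul, abs_neg, hσ1, one_mul, abs_inv, abs_mul, one_div]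
    exact inv_anti₀ heta (hdc x hx)
  -- final bound
  have hbound2 : ‖∫ x in u..v, E x * W' x‖ ≤ 2 / eta := by
    calc ‖∫ x in u..v, E x * W' x‖ ≤ ∫ x in u..v, ‖E x * W' x‖ :=
          intervalIntegral.norm_integral_le_integral_norm huv
      _ = ∫ x in u..v, r' x := by
          apply intervalIntegral.integral_congr
          intro x hx; exact hnorm_pt x (huIcc ▸ hx)
      _ = r v - r u := hftc
      _ ≤ |r v| + |r u| := by
          have := abs_le.mp (le_refl |r v|)
          have h1 := le_abs_self (r v)
          have h2 := neg_abs_le (r u)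
          linarith
      _ ≤ 1 / eta + 1 / eta := add_le_add
          (habsr v ⟨huv, le_refl v⟩) (habsr u ⟨le_refl u, huv⟩)
      _ = 2 / eta := by ring
  calc ‖∫ x in u..v, E x‖
      = ‖E v * W v - E u * W u - ∫ x in u..v, E x * W' x‖ := by rw [heq]
    _ ≤ ‖E v * W v - E u * W u‖ + ‖∫ x in u..v, E x * W' x‖ := norm_sub_le _ _
    _ ≤ (‖E v * W v‖ + ‖E u * W u‖) + 2 / eta := add_le_add (norm_sub_le _ _) hbound2
    _ ≤ (1 * (1 / eta) + 1 * (1 / eta)) + 2 / eta := by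
        apply add_le_add_left
        apply add_le_add
        · rw [norm_mul, hnormE]
          exact mul_le_mul_of_nonneg_left (hnormW v ⟨huv, le_refl v⟩) (by norm_num)
        · rw [norm_mul, hnormE]
          exact mul_le_mul_of_nonneg_left (hnormW u ⟨le_refl u, huv⟩) (by norm_num)
    _ = 4 / eta := by ring


lemma vdc_split {f : ℝ → ℂ} {G : ℝ → ℝ} {u v lam δ B : ℝ}
    (hlam : 0 < lam) (hδ : 0 < δ) (hB : 0 ≤ B) (huv : u ≤ v)
    (hf1 : ∀ x ∈ Icc u v, ‖f x‖ ≤ 1)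
    (hfc : ContinuousOn f (Icc u v))
    (hGc : ContinuousOn G (Icc u v))
    (hG' : ∀ x ∈ Ioo u v, HasDerivAt G (deriv G x) x ∧ lam ≤ deriv G x)
    (hp : ∀ p q, u ≤ p → p ≤ q → q ≤ v → (∀ x ∈ Ioo p q, δ * lam ≤ |G x|) →
      ‖∫ x in p..q, f x‖ ≤ B) :
    ‖∫ x in u..v, f x‖ ≤ 2 * B + 2 * δ := by
  set L := δ * lam with hL
  have hL0 : 0 < L := mul_pos hδ hlam
  -- strict monotonicity of G on Icc u v
  have hmono : StrictMonoOn G (Icc u v) := by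
    apply strictMonoOn_of_deriv_pos (convex_Icc u v) hGc
    intro x hx
    rw [interior_Icc] at hx
    exact lt_of_lt_of_le hlam (hG' x hx).2
  have hGuv : G u ≤ G v :=
    hmono.monotoneOn ⟨le_refl u, huv⟩ ⟨huv, le_refl v⟩ huv
  -- MVT consequence
  have hMVT : ∀ p q, u ≤ p → p < q → q ≤ v → lam * (q - p) ≤ G q - G p := by
    intro p q hup hpq hqv
    obtain ⟨c, hc, hc'⟩ := exists_hasDerivAt_eq_slope G (fun x => deriv G x) hpq
      (hGc.mono (Icc_subset_Icc hup hqv))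
      (fun x hx => (hG' x ⟨lt_of_le_of_lt hup hx.1, lt_of_lt_of_le hx.2 hqv⟩).1)
    have hcm : c ∈ Ioo u v := ⟨lt_of_le_of_lt hup hc.1, lt_of_lt_of_le hc.2 hqv⟩
    have h1 := (hG' c hcm).2
    rw [hc'] at h1
    have h2 : 0 < q - p := by linarith
    calc lam * (q - p) ≤ ((G q - G p)/(q-p)) * (q - p) := by
          apply mul_le_mul_of_nonneg_right h1 h2.le
      _ = G q - G p := by field_simp
  -- integrability
  have hint : ∀ p q, u ≤ p → p ≤ q → q ≤ v → IntervalIntegrable f volume p q := by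
    intro p q hup hpq hqv
    exact (hfc.mono (Icc_subset_Icc hup hqv)).intervalIntegrable_of_Icc hpq
  -- case A : G v ≤ -L
  rcases le_or_gt (G v) (-L) with hA | hA
  · have h1 : ∀ x ∈ Ioo u v, L ≤ |G x| := by
      intro x hx
      have := hmono ⟨hx.1.le, hx.2.le⟩ ⟨huv, le_refl v⟩ hx.2
      rw [abs_of_nonpos (by linarith)]
      linarith
    have := hp u v (le_refl u) huv (le_refl v) h1
    linarith
  rcases le_or_gt L (G u) with hB' | hB'
  -- case B : L ≤ G u
  · have h1 : ∀ x ∈ Ioo u v, L ≤ |G x| := by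
      intro x hx
      have := hmono ⟨le_refl u, huv⟩ ⟨hx.1.le, hx.2.le⟩ hx.1
      rw [abs_of_nonneg (by linarith)]
      linarith
    have := hp u v (le_refl u) huv (le_refl v) h1
    linarith
  -- case C
  obtain ⟨p, hpmem, hpleft, hpval⟩ : ∃ p ∈ Icc u v,
      (∀ x ∈ Ioo u p, L ≤ |G x|) ∧ (-L ≤ G p ∧ (p = u ∨ G p = -L)) := by
    rcases le_or_gt (-L) (G u) with h | h
    · exact ⟨u, ⟨le_refl u, huv⟩, fun x hx => absurd hx.2 (not_lt.mpr hx.1.le), h, Or.inl rfl⟩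
    · obtain ⟨p, hpm, hpv⟩ := intermediate_value_Icc huv hGc (show -L ∈ Icc (G u) (G v) from ⟨h.le, hA.le⟩)
      refine ⟨p, hpm, ?_, by rw [hpv], Or.inr hpv⟩
      intro x hx
      have h2 : G x < G p := hmono ⟨hx.1.le, le_trans hx.2.le hpm.2⟩ hpm hx.2
      rw [abs_of_nonpos (by rw [hpv] at h2; linarith)]
      rw [hpv] at h2; linarith
  obtain ⟨q, hqmem, hqright, hqval⟩ : ∃ q ∈ Icc u v,
      (∀ x ∈ Ioo q v, L ≤ |G x|) ∧ (G q ≤ L ∧ (q = v ∨ G q = L)) := by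
    rcases le_or_gt (G v) L with h | h
    · exact ⟨v, ⟨huv, le_refl v⟩, fun x hx => absurd hx.1 (not_lt.mpr hx.2.le), h, Or.inl rfl⟩
    · obtain ⟨q, hqm, hqv⟩ := intermediate_value_Icc huv hGc
        (show L ∈ Icc (G u) (G v) from ⟨hB'.le, h.le⟩)
      refine ⟨q, hqm, ?_, by rw [hqv], Or.inr hqv⟩
      intro x hx
      have h2 : G q < G x := hmono hqm ⟨le_trans hqm.1 hx.1.le, hx.2.le⟩ hx.1
      rw [hqv] at h2
      rw [abs_of_nonneg (by linarith)]
      linarith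
  -- p ≤ q
  have hpq : p ≤ q := by
    rcases hpval.2 with rfl | hpv
    · exact hqmem.1
    · rcases hqval.2 with rfl | hqv
      · exact hpmem.2
      · by_contra hcon
        push_neg at hcon
        have := hmono hqmem hpmem hcon
        rw [hpv, hqv] at this
        linarith
  -- length of middle
  have hlen : q - p ≤ 2 * δ := by
    rcases eq_or_lt_of_le hpq with rfl | hlt
    · linarith
    · have h1 := hMVT p q hpmem.1 hlt hqmem.2
      have h2 : G q - G p ≤ 2 * L := by
        have := hpval.1; have := hqval.1; linarith
      rw [hL] at h2
      have h3 : lam * (q - p) ≤ 2 * (δ * lam) := le_trans h1 h2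
      nlinarith
  -- split the integral
  have hI1 := hint u p (le_refl u) hpmem.1 (hpmem.2.trans (le_refl v))
  have hI2 := hint p q hpmem.1 hpq hqmem.2
  have hI3 := hint q v (hqmem.1) hqmem.2 (le_refl v)
  have hsplit1 : (∫ x in u..p, f x) + ∫ x in p..q, f x = ∫ x in u..q, f x :=
    intervalIntegral.integral_add_adjacent_intervals hI1 hI2
  have hsplit2 : (∫ x in u..q, f x) + ∫ x in q..v, f x = ∫ x in u..v, f x :=
    intervalIntegral.integral_add_adjacent_intervals
      (hint u q (le_refl u) (hpmem.1.trans hpq) hqmem.2) hI3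
  have hbound1 : ‖∫ x in u..p, f x‖ ≤ B :=
    hp u p (le_refl u) hpmem.1 hpmem.2 hpleft
  have hbound3 : ‖∫ x in q..v, f x‖ ≤ B :=
    hp q v hqmem.1 hqmem.2 (le_refl v) hqright
  have hbound2 : ‖∫ x in p..q, f x‖ ≤ 2 * δ := by
    have := intervalIntegral.norm_integral_le_of_norm_le_const
      (C := 1) (f := f) (a := p) (b := q) ?_
    · rw [abs_of_nonneg (by linarith)] at this
      linarith
    · intro x hx
      rw [uIoc_of_le hpq] at hx
      exact hf1 x ⟨le_trans hpmem.1 hx.1.le, le_trans hx.2 hqmem.2⟩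
  calc ‖∫ x in u..v, f x‖ = ‖((∫ x in u..p, f x) + ∫ x in p..q, f x) + ∫ x in q..v, f x‖ := by
        rw [← hsplit2, ← hsplit1]
    _ ≤ ‖(∫ x in u..p, f x) + (∫ x in p..q, f x)‖ + ‖∫ x in q..v, f x‖ := norm_add_le _ _
    _ ≤ (‖∫ x in u..p, f x‖ + ‖∫ x in p..q, f x‖) + ‖∫ x in q..v, f x‖ :=
        add_le_add_left (norm_add_le _ _) _
    _ ≤ (B + 2 * δ) + B := add_le_add (add_le_add hbound1 hbound2) hbound3
    _ = 2 * B + 2 * δ := by ring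


def VdcGood (k : ℕ) (C : ℝ) : Prop :=
  ∀ (a b t lam u v : ℝ) (F : ℝ → ℝ), 0 < lam →
    ContDiffOn ℝ k F (Ioo a b) → Icc u v ⊆ Ioo a b → u ≤ v →
    (∀ x ∈ Ioo u v, lam ≤ |t| * |iteratedDeriv k F x|) →
    ‖∫ x in u..v, Complex.exp (-Complex.I * t * F x)‖ ≤ C * lam ^ (-(1:ℝ)/(k:ℝ))

lemma vdc_rpow (k : ℕ) (hk : 1 ≤ k) {lam : ℝ} (hlam : 0 < lam) :
    (lam ^ (-(1:ℝ)/((k:ℝ)+1)) * lam) ^ (-(1:ℝ)/(k:ℝ)) = lam ^ (-(1:ℝ)/((k:ℝ)+1)) := by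
  have hk0 : (k:ℝ) ≠ 0 := Nat.cast_ne_zero.mpr (by omega)
  have hk1 : (k:ℝ) + 1 ≠ 0 := by positivity
  rw [← Real.rpow_add_one hlam.ne' (-(1:ℝ)/((k:ℝ)+1)), ← Real.rpow_mul hlam.le]
  congr 1
  field_simp
  ring

lemma vdc_norm_one (t : ℝ) (F : ℝ → ℝ) (s : Set ℝ) :
    ∀ x ∈ s, ‖Complex.exp (-Complex.I * t * F x)‖ ≤ 1 :=
  fun x _ => le_of_eq (vdc_norm_exp t (F x))

lemma vdc_exp_contOn {t a b : ℝ} {F : ℝ → ℝ} (hF : ContinuousOn F (Ioo a b)) :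
    ContinuousOn (fun x => Complex.exp (-Complex.I * t * F x)) (Ioo a b) :=
  Complex.continuous_exp.comp_continuousOn
    (continuousOn_const.mul (Complex.continuous_ofReal.comp_continuousOn hF))

lemma vdc_good_two : VdcGood 2 10 := by
  intro a b t lam u v F hlam hF hsub huv hbound
  set δ := lam ^ (-(1:ℝ)/(2:ℝ)) with hδdef
  have hδ : 0 < δ := Real.rpow_pos_of_pos hlam _
  have hδlam : 0 < δ * lam := mul_pos hδ hlam
  have hopen : IsOpen (Ioo a b) := isOpen_Ioo
  have key : ∀ (F : ℝ → ℝ), ContDiffOn ℝ 2 F (Ioo a b) →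
      (∀ x ∈ Ioo u v, lam ≤ t * iteratedDeriv 2 F x) →
      ‖∫ x in u..v, Complex.exp (-Complex.I * t * F x)‖ ≤ 2 * (4 / (δ * lam)) + 2 * δ := by
    intro F hF hpos
    have hIoosub : Ioo u v ⊆ Ioo a b := fun x hx => hsub (Ioo_subset_Icc_self hx)
    apply vdc_split (G := fun x => t * deriv F x) hlam hδ (by positivity) huv
      (vdc_norm_one t F _) ((vdc_exp_contOn hF.continuousOn).mono hsub)
    · exact continuousOn_const.mul (by
        have := vdc_contOn_iteratedDeriv (n := 2) (k := 1) (by norm_num) hopen hF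
        rw [iteratedDeriv_one] at this
        exact this.mono hsub)
    · intro x hx
      have hd : HasDerivAt (fun y => t * deriv F y) (t * iteratedDeriv 2 F x) x := by
        have h1 := vdc_hasDerivAt_iteratedDeriv (n := 2) (k := 1) (by norm_num) hopen hF
          (hIoosub hx)
        rw [iteratedDeriv_one] at h1
        exact h1.const_mul t
      refine ⟨hd.deriv ▸ hd, hd.deriv ▸ hpos x hx⟩
    · intro p q hup hpq hqv hGb
      have hsubpq : Icc p q ⊆ Ioo a b := (Icc_subset_Icc hup hqv).trans hsub
      have hIoopq : Ioo p q ⊆ Ioo u v := Ioo_subset_Ioo hup hqv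
      apply vdc_base hδlam hF hsubpq hpq
      · intro x hx
        have := hGb x hx
        rwa [abs_mul] at this
      · left
        intro x hx
        have := hpos x (hIoopq hx)
        rw [iteratedDeriv_succ, iteratedDeriv_one] at this
        linarith
  have hfinal : 2 * (4 / (δ * lam)) + 2 * δ = 10 * lam ^ (-(1:ℝ)/(2:ℝ)) := by
    have hstep : lam ^ (-(1:ℝ)/2) * lam = lam ^ ((1:ℝ)/2) := by
      rw [← Real.rpow_add_one hlam.ne']; norm_num
    have h2 : 4 / (δ * lam) = 4 * δ := by
      rw [hδdef, div_eq_mul_inv]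
      congr 1
      rw [hstep, show (-(1:ℝ)/2) = -((1:ℝ)/2) by norm_num, Real.rpow_neg hlam.le]
    rw [h2, hδdef]; ring
  -- sign dichotomy
  have hDcont : ContinuousOn (fun x => t * iteratedDeriv 2 F x) (Ioo u v) :=
    continuousOn_const.mul ((vdc_contOn_iteratedDeriv (n := 2) (k := 2) le_rfl hopen hF).mono
      (fun x hx => hsub (Ioo_subset_Icc_self hx)))
  have habs : ∀ x ∈ Ioo u v, lam ≤ |t * iteratedDeriv 2 F x| := by
    intro x hx; rw [abs_mul]; exact hbound x hx
  have hexp : (-(1:ℝ)/((2:ℕ):ℝ)) = (-(1:ℝ)/(2:ℝ)) := by norm_num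
  rw [hexp]
  rcases vdc_sign_dichotomy hlam hDcont habs with hpos | hneg
  · have h2 := key F hF hpos
    rwa [hfinal] at h2
  · have hFneg : ContDiffOn ℝ 2 (fun x => -F x) (Ioo a b) := hF.neg
    have hposneg : ∀ x ∈ Ioo u v, lam ≤ t * iteratedDeriv 2 (fun y => -F y) x := by
      intro x hx
      rw [iteratedDeriv_fun_neg]
      have := hneg x hx
      linarith
    have h2 := key (fun x => -F x) hFneg hposneg
    simp only [Complex.ofReal_neg] at h2
    rwa [hfinal, vdc_conj_int u v t F] at h2

lemma vdc_good_step (k : ℕ) (hk : 2 ≤ k) (C : ℝ) (hC : 0 < C) (hGood : VdcGood k C) :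
    VdcGood (k+1) (2*C + 2) := by
  intro a b t lam u v F hlam hF hsub huv hbound
  have hk0 : (k:ℝ) ≠ 0 := Nat.cast_ne_zero.mpr (by omega)
  set δ := lam ^ (-(1:ℝ)/((k:ℝ)+1)) with hδdef
  have hδ : 0 < δ := Real.rpow_pos_of_pos hlam _
  have hδlam : 0 < δ * lam := mul_pos hδ hlam
  set B := C * (δ * lam) ^ (-(1:ℝ)/(k:ℝ)) with hBdef
  have hB : 0 ≤ B := by positivity
  have hopen : IsOpen (Ioo a b) := isOpen_Ioo
  have hFk : ContDiffOn ℝ k F (Ioo a b) := hF.of_le (by exact_mod_cast Nat.le_succ k)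
  have key : ∀ (F : ℝ → ℝ), ContDiffOn ℝ (k+1) F (Ioo a b) →
      (∀ x ∈ Ioo u v, lam ≤ t * iteratedDeriv (k+1) F x) →
      ‖∫ x in u..v, Complex.exp (-Complex.I * t * F x)‖ ≤ 2 * B + 2 * δ := by
    intro F hF hpos
    have hFk : ContDiffOn ℝ k F (Ioo a b) := hF.of_le (by exact_mod_cast Nat.le_succ k)
    have hIoosub : Ioo u v ⊆ Ioo a b := fun x hx => hsub (Ioo_subset_Icc_self hx)
    apply vdc_split (G := fun x => t * iteratedDeriv k F x) hlam hδ hB huv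
      (vdc_norm_one t F _) ((vdc_exp_contOn hF.continuousOn).mono hsub)
    · exact continuousOn_const.mul
        ((vdc_contOn_iteratedDeriv (n := k+1) (k := k) (Nat.le_succ k) hopen hF).mono hsub)
    · intro x hx
      have hd : HasDerivAt (fun y => t * iteratedDeriv k F y) (t * iteratedDeriv (k+1) F x) x :=
        (vdc_hasDerivAt_iteratedDeriv (n := k+1) (k := k) (Nat.lt_succ_self k) hopen hF
          (hIoosub hx)).const_mul t
      refine ⟨hd.deriv ▸ hd, hd.deriv ▸ hpos x hx⟩
    · intro p q hup hpq hqv hGb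
      have hsubpq : Icc p q ⊆ Ioo a b := (Icc_subset_Icc hup hqv).trans hsub
      have h2 := hGood a b t (δ * lam) p q F hδlam hFk hsubpq hpq (by
        intro x hx
        have := hGb x hx
        rwa [abs_mul] at this)
      exact h2
  have hfinal : 2 * B + 2 * δ = (2*C + 2) * lam ^ (-(1:ℝ)/((k:ℝ)+1)) := by
    rw [hBdef, hδdef, vdc_rpow k (by omega) hlam]
    ring
  have hexp : (-(1:ℝ)/(((k+1:ℕ)):ℝ)) = (-(1:ℝ)/((k:ℝ)+1)) := by push_cast; ring
  rw [hexp]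
  have hDcont : ContinuousOn (fun x => t * iteratedDeriv (k+1) F x) (Ioo u v) :=
    continuousOn_const.mul ((vdc_contOn_iteratedDeriv (n := k+1) (k := k+1) le_rfl hopen hF).mono
      (fun x hx => hsub (Ioo_subset_Icc_self hx)))
  have habs : ∀ x ∈ Ioo u v, lam ≤ |t * iteratedDeriv (k+1) F x| := by
    intro x hx; rw [abs_mul]; exact hbound x hx
  rcases vdc_sign_dichotomy hlam hDcont habs with hpos | hneg
  · have h2 := key F hF hpos
    rwa [hfinal] at h2
  · have hFneg : ContDiffOn ℝ (k+1) (fun x => -F x) (Ioo a b) := hF.neg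
    have hposneg : ∀ x ∈ Ioo u v, lam ≤ t * iteratedDeriv (k+1) (fun y => -F y) x := by
      intro x hx
      rw [iteratedDeriv_fun_neg]
      have := hneg x hx
      linarith
    have h2 := key (fun x => -F x) hFneg hposneg
    simp only [Complex.ofReal_neg] at h2
    rwa [hfinal, vdc_conj_int u v t F] at h2

lemma vdc_core (k : ℕ) (hk : 2 ≤ k) : ∃ C : ℝ, 0 < C ∧ VdcGood k C := by
  induction k, hk using Nat.le_induction with
  | base => exact ⟨10, by norm_num, vdc_good_two⟩
  | succ n hn ih =>
    obtain ⟨C, hC, hGood⟩ := ih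
    exact ⟨2*C + 2, by linarith, vdc_good_step n hn C hC hGood⟩


lemma vdc_exp_contOn' {t a b : ℝ} {F : ℝ → ℝ} (hF : ContinuousOn F (Ioo a b)) :
    ContinuousOn (fun x => Complex.exp (-Complex.I * t * F x)) (Ioo a b) :=
  Complex.continuous_exp.comp_continuousOn
    (continuousOn_const.mul (Complex.continuous_ofReal.comp_continuousOn hF))

-- integrability of functions bounded and continuous on the open interval
lemma vdc_II {h : ℝ → ℂ} {a b p q K : ℝ}
    (hc : ContinuousOn h (Ioo a b)) (hK : ∀ x ∈ Ioo a b, ‖h x‖ ≤ K)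
    (hp : a ≤ p) (hpq : p ≤ q) (hq : q ≤ b) : IntervalIntegrable h volume p q := by
  rw [intervalIntegrable_iff_integrableOn_Ioc_of_le hpq]
  have hsub : Ioo p q ⊆ Ioo a b := Ioo_subset_Ioo hp hq
  have h1 : IntegrableOn h (Ioo p q) volume := by
    refine ⟨(hc.mono hsub).aestronglyMeasurable measurableSet_Ioo, ?_⟩
    apply HasFiniteIntegral.restrict_of_bounded (C := K)
    · exact ((measure_mono (Ioo_subset_Icc_self.trans (Icc_subset_Icc hp hq))).trans_lt
        measure_Icc_lt_top)
    · exact (ae_restrict_iff' measurableSet_Ioo).mpr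
        (Filter.Eventually.of_forall (fun x hx => hK x (hsub hx)))
  exact h1.congr_set_ae Ioo_ae_eq_Ioc.symm

lemma vdc_amp {a b t u v M : ℝ} {F : ℝ → ℝ} {ψ : ℝ → ℂ}
    (hu : a < u) (huv : u ≤ v) (hv : v < b)
    (hFc : ContinuousOn F (Ioo a b))
    (hψc : ContinuousOn ψ (Icc a b))
    (hψd : ∀ x ∈ Ioo a b, HasDerivAt ψ (deriv ψ x) x)
    (hψ'c : ContinuousOn (deriv ψ) (Ioo a b))
    (hM : 0 ≤ M)
    (hΦbd : ∀ x ∈ Icc u v, ‖∫ s in u..x, Complex.exp (-Complex.I * t * F s)‖ ≤ M) :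
    ‖∫ x in u..v, Complex.exp (-Complex.I * t * F x) * ψ x‖ ≤
      M * (‖ψ v‖ + ∫ x in u..v, ‖deriv ψ x‖) := by
  set E : ℝ → ℂ := fun x => Complex.exp (-Complex.I * t * F x) with hE
  have hopen : IsOpen (Ioo a b) := isOpen_Ioo
  have hsubuv : Icc u v ⊆ Ioo a b := fun x hx => ⟨lt_of_lt_of_le hu hx.1, lt_of_le_of_lt hx.2 hv⟩
  have hEc : ContinuousOn E (Ioo a b) := vdc_exp_contOn' hFc
  have hEcuv : ContinuousOn E (Icc u v) := hEc.mono hsubuv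
  have hEint : ∀ p q, u ≤ p → p ≤ q → q ≤ v → IntervalIntegrable E volume p q :=
    fun p q hp hpq hq => (hEcuv.mono (Icc_subset_Icc hp hq)).intervalIntegrable_of_Icc hpq
  set Φ : ℝ → ℂ := fun x => ∫ s in u..x, E s with hΦ
  have hΦd : ∀ x ∈ Icc u v, HasDerivAt Φ (E x) x := by
    intro x hx
    apply intervalIntegral.integral_hasDerivAt_right (hEint u x (le_refl u) hx.1 hx.2)
    · exact (ContinuousOn.stronglyMeasurableAtFilter hopen hEc) x (hsubuv hx)
    · exact hEc.continuousAt (hopen.mem_nhds (hsubuv hx))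
  have hΦc : ContinuousOn Φ (Icc u v) :=
    fun x hx => ((hΦd x hx).continuousAt).continuousWithinAt
  have hψduv : ∀ x ∈ Icc u v, HasDerivAt ψ (deriv ψ x) x := fun x hx => hψd x (hsubuv hx)
  have hψ'cuv : ContinuousOn (deriv ψ) (Icc u v) := hψ'c.mono hsubuv
  have hψ'int : IntervalIntegrable (deriv ψ) volume u v :=
    hψ'cuv.intervalIntegrable_of_Icc huv
  have huIcc : uIcc u v = Icc u v := uIcc_of_le huv
  have hibp := intervalIntegral.integral_mul_deriv_eq_deriv_mul
    (u := ψ) (u' := deriv ψ) (v := Φ) (v' := E)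
    (fun x hx => hψduv x (huIcc ▸ hx)) (fun x hx => hΦd x (huIcc ▸ hx))
    hψ'int (hEint u v (le_refl u) huv (le_refl v))
  have hΦu : Φ u = 0 := intervalIntegral.integral_same
  have hcong : ∫ x in u..v, E x * ψ x = ∫ x in u..v, ψ x * E x := by
    apply intervalIntegral.integral_congr
    intro x _; exact mul_comm _ _
  rw [hcong, hibp, hΦu, mul_zero, sub_zero]
  have hb1 : ‖ψ v * Φ v‖ ≤ ‖ψ v‖ * M := by
    rw [norm_mul]
    exact mul_le_mul_of_nonneg_left (hΦbd v ⟨huv, le_refl v⟩) (norm_nonneg _)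
  have hb2 : ‖∫ x in u..v, deriv ψ x * Φ x‖ ≤ (∫ x in u..v, ‖deriv ψ x‖) * M := by
    calc ‖∫ x in u..v, deriv ψ x * Φ x‖ ≤ ∫ x in u..v, ‖deriv ψ x * Φ x‖ :=
          intervalIntegral.norm_integral_le_integral_norm huv
      _ ≤ ∫ x in u..v, ‖deriv ψ x‖ * M := by
          apply intervalIntegral.integral_mono_on huv
          · exact ((hψ'cuv.mul hΦc).norm).intervalIntegrable_of_Icc huv
          · exact (hψ'cuv.norm.mul continuousOn_const).intervalIntegrable_of_Icc huv
          · intro x hx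
            rw [norm_mul]
            exact mul_le_mul_of_nonneg_left (hΦbd x hx) (norm_nonneg _)
      _ = (∫ x in u..v, ‖deriv ψ x‖) * M := intervalIntegral.integral_mul_const M _
  calc ‖ψ v * Φ v - ∫ x in u..v, deriv ψ x * Φ x‖
      ≤ ‖ψ v * Φ v‖ + ‖∫ x in u..v, deriv ψ x * Φ x‖ := norm_sub_le _ _
    _ ≤ ‖ψ v‖ * M + (∫ x in u..v, ‖deriv ψ x‖) * M := add_le_add hb1 hb2
    _ = M * (‖ψ v‖ + ∫ x in u..v, ‖deriv ψ x‖) := by ring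


theorem stmt_1 (k : ℕ) (hk : 2 ≤ k) :
    ∃ c > 0, ∀ (a b ε t : ℝ) (F : ℝ → ℝ) (ψ : ℝ → ℂ),
      a < b → 0 < ε → t ≠ 0 →
      ContDiffOn ℝ k F (Ioo a b) →
      (∀ x ∈ Ioo a b, ε ≤ |iteratedDeriv k F x|) →
      ContDiffOn ℝ 1 ψ (Icc a b) →
      ‖∫ x in a..b, Complex.exp (-Complex.I * t * F x) * ψ x‖ ≤
        c * ε ^ (-(1 : ℝ) / k) * |t| ^ (-(1 : ℝ) / k) *
          (‖ψ b‖ + ∫ x in a..b, ‖deriv ψ x‖) := by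
  obtain ⟨C, hC, hGood⟩ := vdc_core k hk
  refine ⟨C, hC, ?_⟩
  intro a b ε t F ψ hab hε ht hF hFk hψ
  set E : ℝ → ℂ := fun x => Complex.exp (-Complex.I * t * F x) with hE
  set lam : ℝ := ε * |t| with hlamdef
  have hlam0 : 0 < lam := mul_pos hε (abs_pos.mpr ht)
  set M : ℝ := C * lam ^ (-(1:ℝ)/(k:ℝ)) with hMdef
  have hM0 : 0 < M := mul_pos hC (Real.rpow_pos_of_pos hlam0 _)
  have hopen : IsOpen (Ioo a b) := isOpen_Ioo
  -- facts about ψ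
  have hψc : ContinuousOn ψ (Icc a b) := hψ.continuousOn
  have hψdiff : DifferentiableOn ℝ ψ (Icc a b) := hψ.differentiableOn (by norm_num)
  have hψd : ∀ x ∈ Ioo a b, HasDerivAt ψ (deriv ψ x) x := fun x hx =>
    ((hψdiff x (Ioo_subset_Icc_self hx)).differentiableAt
      (Icc_mem_nhds hx.1 hx.2)).hasDerivAt
  have hDW : ContinuousOn (derivWithin ψ (Icc a b)) (Icc a b) :=
    hψ.continuousOn_derivWithin (uniqueDiffOn_Icc hab) le_rfl
  have hDWeq : ∀ x ∈ Ioo a b, deriv ψ x = derivWithin ψ (Icc a b) x := fun x hx =>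
    (derivWithin_of_mem_nhds (Icc_mem_nhds hx.1 hx.2)).symm
  have hψ'c : ContinuousOn (deriv ψ) (Ioo a b) :=
    (hDW.mono Ioo_subset_Icc_self).congr hDWeq
  obtain ⟨K, hKbd⟩ := isCompact_Icc.exists_bound_of_continuousOn hDW
  have hψ'K : ∀ x ∈ Ioo a b, ‖deriv ψ x‖ ≤ K := fun x hx => by
    rw [hDWeq x hx]; exact hKbd x (Ioo_subset_Icc_self hx)
  obtain ⟨S, hSbd⟩ := isCompact_Icc.exists_bound_of_continuousOn hψc
  have hS0 : 0 ≤ S := (norm_nonneg (ψ a)).trans (hSbd a ⟨le_refl a, hab.le⟩)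
  -- E facts
  have hFc : ContinuousOn F (Ioo a b) := hF.continuousOn
  have hEc : ContinuousOn E (Ioo a b) := vdc_exp_contOn' hFc
  have hEψnorm : ∀ x, ‖E x * ψ x‖ = ‖ψ x‖ := fun x => by
    rw [norm_mul, hE, vdc_norm_exp, one_mul]
  have hEψint : ∀ p q, a ≤ p → p ≤ q → q ≤ b →
      IntervalIntegrable (fun x => E x * ψ x) volume p q := by
    intro p q hp hpq hq
    apply vdc_II (K := S) (hEc.mul (hψc.mono Ioo_subset_Icc_self)) _ hp hpq hq
    intro x hx
    exact (hEψnorm x).trans_le (hSbd x (Ioo_subset_Icc_self hx))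
  have hψ'int : ∀ p q, a ≤ p → p ≤ q → q ≤ b →
      IntervalIntegrable (deriv ψ) volume p q :=
    fun p q hp hpq hq => vdc_II hψ'c hψ'K hp hpq hq
  have hψ'nint : ∀ p q, a ≤ p → p ≤ q → q ≤ b →
      IntervalIntegrable (fun x => ‖deriv ψ x‖) volume p q :=
    fun p q hp hpq hq => (hψ'int p q hp hpq hq).norm
  -- ψ value bound via FTC
  have hψvb : ∀ v ∈ Icc a b, ‖ψ v‖ ≤ ‖ψ b‖ + ∫ x in v..b, ‖deriv ψ x‖ := by
    intro v hv
    have hftc : ∫ x in v..b, deriv ψ x = ψ b - ψ v := by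
      apply intervalIntegral.integral_eq_sub_of_hasDerivAt_of_le hv.2
        (hψc.mono (Icc_subset_Icc hv.1 (le_refl b)))
      · intro x hx
        exact hψd x ⟨lt_of_le_of_lt hv.1 hx.1, hx.2⟩
      · exact hψ'int v b hv.1 hv.2 (le_refl b)
    have h1 : ψ v = ψ b - ∫ x in v..b, deriv ψ x := by rw [hftc]; ring
    calc ‖ψ v‖ = ‖ψ b - ∫ x in v..b, deriv ψ x‖ := by rw [← h1]
      _ ≤ ‖ψ b‖ + ‖∫ x in v..b, deriv ψ x‖ := norm_sub_le _ _
      _ ≤ ‖ψ b‖ + ∫ x in v..b, ‖deriv ψ x‖ := add_le_add_right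
          (intervalIntegral.norm_integral_le_integral_norm hv.2) _
  -- final RHS identification
  have hRHS : C * ε ^ (-(1 : ℝ) / k) * |t| ^ (-(1 : ℝ) / k) *
      (‖ψ b‖ + ∫ x in a..b, ‖deriv ψ x‖) = M * (‖ψ b‖ + ∫ x in a..b, ‖deriv ψ x‖) := by
    rw [hMdef, hlamdef, Real.mul_rpow hε.le (abs_nonneg t)]
    ring
  rw [hRHS]
  set R := M * (‖ψ b‖ + ∫ x in a..b, ‖deriv ψ x‖) with hR
  -- epsilon argument
  apply le_of_forall_sub_le
  intro θ hθ
  set d : ℝ := min ((b-a)/4) (θ/(2*S+1)) with hd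
  have hd0 : 0 < d := lt_min (by linarith) (by positivity)
  have hd4 : d ≤ (b-a)/4 := min_le_left _ _
  have hdθ : d ≤ θ/(2*S+1) := min_le_right _ _
  set u : ℝ := a + d with hu'
  set v : ℝ := b - d with hv'
  have hu : a < u := by rw [hu']; linarith
  have hv : v < b := by rw [hv']; linarith
  have huv : u ≤ v := by rw [hu', hv']; linarith
  have hub : u ≤ b := by linarith
  have hav : a ≤ v := by linarith
  have hsubuv : Icc u v ⊆ Ioo a b := fun x hx =>
    ⟨lt_of_lt_of_le hu hx.1, lt_of_le_of_lt hx.2 hv⟩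
  -- Φ bound from the core estimate
  have hΦbd : ∀ x ∈ Icc u v, ‖∫ s in u..x, E s‖ ≤ M := by
    intro x hx
    apply hGood a b t lam u x F hlam0 hF
      ((Icc_subset_Icc (le_refl u) hx.2).trans hsubuv) hx.1
    intro y hy
    have hymem : y ∈ Ioo a b := hsubuv ⟨hy.1.le, hy.2.le.trans hx.2⟩
    calc lam = |t| * ε := by rw [hlamdef]; ring
      _ ≤ |t| * |iteratedDeriv k F y| :=
          mul_le_mul_of_nonneg_left (hFk y hymem) (abs_nonneg t)
  -- middle bound
  have hmid : ‖∫ x in u..v, E x * ψ x‖ ≤ M * (‖ψ v‖ + ∫ x in u..v, ‖deriv ψ x‖) :=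
    vdc_amp hu huv hv hFc hψc hψd hψ'c hM0.le hΦbd
  have hmid2 : ‖∫ x in u..v, E x * ψ x‖ ≤ R := by
    have h1 : (∫ x in u..v, ‖deriv ψ x‖) + ∫ x in v..b, ‖deriv ψ x‖
        = ∫ x in u..b, ‖deriv ψ x‖ :=
      intervalIntegral.integral_add_adjacent_intervals
        (hψ'nint u v hu.le huv hv.le) (hψ'nint v b hav hv.le (le_refl b))
    have h2 : (∫ x in a..u, ‖deriv ψ x‖) + ∫ x in u..b, ‖deriv ψ x‖
        = ∫ x in a..b, ‖deriv ψ x‖ :=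
      intervalIntegral.integral_add_adjacent_intervals
        (hψ'nint a u (le_refl a) hu.le hub) (hψ'nint u b hu.le hub (le_refl b))
    have h3 : 0 ≤ ∫ x in a..u, ‖deriv ψ x‖ :=
      intervalIntegral.integral_nonneg hu.le (fun x _ => norm_nonneg _)
    have h4 := hψvb v ⟨hav, hv.le⟩
    calc ‖∫ x in u..v, E x * ψ x‖ ≤ M * (‖ψ v‖ + ∫ x in u..v, ‖deriv ψ x‖) := hmid
      _ ≤ M * ((‖ψ b‖ + ∫ x in v..b, ‖deriv ψ x‖) + ∫ x in u..v, ‖deriv ψ x‖) := by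
          apply mul_le_mul_of_nonneg_left _ hM0.le
          linarith
      _ = M * (‖ψ b‖ + ∫ x in u..b, ‖deriv ψ x‖) := by rw [← h1]; ring_nf
      _ ≤ M * (‖ψ b‖ + ∫ x in a..b, ‖deriv ψ x‖) := by
          apply mul_le_mul_of_nonneg_left _ hM0.le
          rw [← h2]; linarith
      _ = R := by rw [hR]
  -- edge bounds
  have hedge1 : ‖∫ x in a..u, E x * ψ x‖ ≤ S * d := by
    have := intervalIntegral.norm_integral_le_of_norm_le_const (C := S)
      (f := fun x => E x * ψ x) (a := a) (b := u) ?_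
    · rw [abs_of_nonneg (by rw [hu']; linarith : (0:ℝ) ≤ u - a)] at this
      calc ‖∫ x in a..u, E x * ψ x‖ ≤ S * (u - a) := this
        _ = S * d := by rw [hu']; ring_nf
    · intro x hx
      rw [uIoc_of_le hu.le] at hx
      rw [hEψnorm]
      exact hSbd x ⟨hx.1.le, hx.2.trans hub⟩
  have hedge2 : ‖∫ x in v..b, E x * ψ x‖ ≤ S * d := by
    have := intervalIntegral.norm_integral_le_of_norm_le_const (C := S)
      (f := fun x => E x * ψ x) (a := v) (b := b) ?_
    · rw [abs_of_nonneg (by rw [hv']; linarith : (0:ℝ) ≤ b - v)] at this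
      calc ‖∫ x in v..b, E x * ψ x‖ ≤ S * (b - v) := this
        _ = S * d := by rw [hv']; ring_nf
    · intro x hx
      rw [uIoc_of_le hv.le] at hx
      rw [hEψnorm]
      exact hSbd x ⟨hav.trans hx.1.le, hx.2⟩
  -- split
  have hs1 : (∫ x in a..u, E x * ψ x) + ∫ x in u..v, E x * ψ x = ∫ x in a..v, E x * ψ x :=
    intervalIntegral.integral_add_adjacent_intervals
      (hEψint a u (le_refl a) hu.le hub) (hEψint u v hu.le huv hv.le)
  have hs2 : (∫ x in a..v, E x * ψ x) + ∫ x in v..b, E x * ψ x = ∫ x in a..b, E x * ψ x :=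
    intervalIntegral.integral_add_adjacent_intervals
      (hEψint a v (le_refl a) hav hv.le) (hEψint v b hav hv.le (le_refl b))
  have htotal : ‖∫ x in a..b, E x * ψ x‖ ≤ R + 2 * S * d := by
    calc ‖∫ x in a..b, E x * ψ x‖
        = ‖((∫ x in a..u, E x * ψ x) + ∫ x in u..v, E x * ψ x) + ∫ x in v..b, E x * ψ x‖ := by
          rw [hs1, hs2]
      _ ≤ ‖(∫ x in a..u, E x * ψ x) + ∫ x in u..v, E x * ψ x‖ + ‖∫ x in v..b, E x * ψ x‖ :=
          norm_add_le _ _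
      _ ≤ (‖∫ x in a..u, E x * ψ x‖ + ‖∫ x in u..v, E x * ψ x‖) + ‖∫ x in v..b, E x * ψ x‖ :=
          add_le_add_left (norm_add_le _ _) _
      _ ≤ (S * d + R) + S * d := add_le_add (add_le_add hedge1 hmid2) hedge2
      _ = R + 2 * S * d := by ring
  have hsmall : 2 * S * d ≤ θ := by
    have h1 : (2*S+1) * d ≤ (2*S+1) * (θ/(2*S+1)) :=
      mul_le_mul_of_nonneg_left hdθ (by linarith)
    have h2 : (2*S+1) * (θ/(2*S+1)) = θ := by field_simp
    nlinarith
  linarith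

end VDC
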